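/- For every bargraph G, the number of occurrences of the factor UH in G equals 1 plus the number of occurrences of the factor HU, and the number of occurrences of the factor HD equals 1 plus the number of occurrences of the factor DH. -/
import Mathlib


/-- Steps of bargraphs / Motzkin paths. -/
inductive Step where
  | U : Step
  | H : Step
  | D : Step
deriving DecidableEq

/-- Vertical displacement of a step. -/
def Step.val : Step → ℤ
  | .U => 1
  | .H => 0
  | .D => -1

/-- Mirror of a step (swap U and D). -/
def Step.mirror : Step → Step
  | .U => .D
  | .H => .H
  | .D => .U

/-- Final height of a word. -/
def hgt (w : List Step) : ℤ := (w.map Step.val).sum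

/-- A Motzkin path prefix: never goes below the x-axis. -/
def IsMotzkinPrefix (w : List Step) : Prop := ∀ p : List Step, p <+: w → 0 ≤ hgt p

/-- A Motzkin path: never below the x-axis, ends at height 0. -/
def IsMotzkin (w : List Step) : Prop := IsMotzkinPrefix w ∧ hgt w = 0

/-- No peak `UD` and no valley `DU`. -/
def Cornerless (w : List Step) : Prop :=
  ¬ [Step.U, Step.D] <:+: w ∧ ¬ [Step.D, Step.U] <:+: w

/-- A bargraph: starts at the origin, ends on the x-axis, stays strictly above the
x-axis except at the endpoints, and has no factor `UD` or `DU`. -/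
def IsBargraph (w : List Step) : Prop :=
  2 ≤ w.length ∧ hgt w = 0 ∧
    (∀ p : List Step, p <+: w → p ≠ [] → p ≠ w → 0 < hgt p) ∧ Cornerless w

/-- Semiperimeter: number of `U` steps plus number of `H` steps. -/
def semi (w : List Step) : ℕ := w.count Step.U + w.count Step.H

/-- Length of the initial run of `U` steps. -/
def leadU : List Step → ℕ
  | Step.U :: rest => leadU rest + 1
  | _ => 0

/-- Length of the initial run of `H` steps. -/
def leadH : List Step → ℕ
  | Step.H :: rest => leadH rest + 1
  | _ => 0

/-- Length of the initial run of `D` steps. -/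
def leadD : List Step → ℕ
  | Step.D :: rest => leadD rest + 1
  | _ => 0

/-- Length of the first maximal run of `D` steps (0 if none). -/
def firstDescLen : List Step → ℕ
  | [] => 0
  | Step.D :: rest => leadD rest + 1
  | _ :: rest => firstDescLen rest

/-- Number of occurrences of the two-letter factor `a b`. -/
def cnt2 (a b : Step) : List Step → ℕ
  | x :: y :: rest => (if x = a ∧ y = b then 1 else 0) + cnt2 a b (y :: rest)
  | _ => 0

/-- Heights of the columns (`H` steps), starting from a given height. -/
def colHeights : ℤ → List Step → List ℤ
  | _, [] => []
  | h, Step.U :: rest => colHeights (h + 1) rest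
  | h, Step.H :: rest => h :: colHeights h rest
  | h, Step.D :: rest => colHeights (h - 1) rest

/-- Width of the leftmost maximal horizontal segment (0 if none). -/
def lhsW : List Step → ℕ
  | [] => 0
  | Step.H :: rest => leadH rest + 1
  | _ :: rest => lhsW rest

/-- Delete `h` steps at the start of the leftmost horizontal segment. -/
def stripLeadH (h : ℕ) : List Step → List Step
  | [] => []
  | Step.H :: rest => List.drop h (Step.H :: rest)
  | s :: rest => s :: stripLeadH h rest

/-- Number of initial columns of height 1: largest `j` such that the word begins `U H^j`. -/
def iuc : List Step → ℕ
  | Step.U :: rest => leadH rest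
  | _ => 0

/-- Number of maximal horizontal segments. -/
def hsCount : List Step → ℕ
  | [] => 0
  | [Step.H] => 1
  | [_] => 0
  | a :: b :: rest => (if a = Step.H ∧ b ≠ Step.H then 1 else 0) + hsCount (b :: rest)

/-- Mirror image: reverse the word and swap `U` with `D`. -/
def mir (w : List Step) : List Step := (w.reverse).map Step.mirror

/-- Shape of strictly alternating bargraphs:
`U^{i₁} H D^{k₁} H U^{i₂} H D^{k₂} H ⋯ U^{iₘ} H D^{kₘ}` with all `iᵣ, kᵣ ≥ 1`. -/
inductive SAShape : List Step → Prop where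
  | base (i k : ℕ) : 1 ≤ i → 1 ≤ k →
      SAShape (List.replicate i Step.U ++ [Step.H] ++ List.replicate k Step.D)
  | cons (i k : ℕ) (w : List Step) : 1 ≤ i → 1 ≤ k → SAShape w →
      SAShape (List.replicate i Step.U ++ [Step.H] ++ List.replicate k Step.D ++ [Step.H] ++ w)

/-- A strictly alternating bargraph. -/
def IsStrictAlt (w : List Step) : Prop := IsBargraph w ∧ SAShape w

/-- A secondary structure on `{0, …, m-1}`: all consecutive edges are present, every
vertex has at most one non-consecutive neighbour, and there are no crossing edges. -/
def IsSecondaryStructure {m : ℕ} (G : SimpleGraph (Fin m)) : Prop :=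
  (∀ i j : Fin m, (i : ℕ) + 1 = (j : ℕ) → G.Adj i j) ∧
  (∀ i j k : Fin m, G.Adj i j → G.Adj i k →
      (i : ℕ) + 1 ≠ (j : ℕ) → (j : ℕ) + 1 ≠ (i : ℕ) →
      (i : ℕ) + 1 ≠ (k : ℕ) → (k : ℕ) + 1 ≠ (i : ℕ) → j = k) ∧
  ¬ ∃ i j k l : Fin m, (i : ℕ) < (j : ℕ) ∧ (j : ℕ) < (k : ℕ) ∧ (k : ℕ) < (l : ℕ) ∧
      G.Adj i k ∧ G.Adj j l

/-- Generating function of bargraphs: `x` (variable 0) marks `H` steps,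
`y` (variable 1) marks `U` steps. -/
noncomputable def BG : MvPowerSeries (Fin 2) ℚ :=
  fun d => (Nat.card {w : List Step //
    IsBargraph w ∧ w.count Step.H = d 0 ∧ w.count Step.U = d 1} : ℚ)

/-- Generating function of cornerless Motzkin paths. -/
noncomputable def MG : MvPowerSeries (Fin 2) ℚ :=
  fun d => (Nat.card {w : List Step //
    IsMotzkin w ∧ Cornerless w ∧ w.count Step.H = d 0 ∧ w.count Step.U = d 1} : ℚ)

/-- Generating function of bargraphs avoiding the factor `DH`. -/
noncomputable def BDH : MvPowerSeries (Fin 2) ℚ :=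
  fun d => (Nat.card {w : List Step //
    IsBargraph w ∧ ¬ [Step.D, Step.H] <:+: w ∧
      w.count Step.H = d 0 ∧ w.count Step.U = d 1} : ℚ)

/-- Generating function of bargraphs avoiding the factors `DH` and `HH`. -/
noncomputable def BDHHH : MvPowerSeries (Fin 2) ℚ :=
  fun d => (Nat.card {w : List Step //
    IsBargraph w ∧ ¬ [Step.D, Step.H] <:+: w ∧ ¬ [Step.H, Step.H] <:+: w ∧
      w.count Step.H = d 0 ∧ w.count Step.U = d 1} : ℚ)

/-- Generating function of cornerless Motzkin path prefixes ending at height `h`. -/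
noncomputable def Pgf (h : ℕ) : MvPowerSeries (Fin 2) ℚ :=
  fun d => (Nat.card {w : List Step //
    IsMotzkinPrefix w ∧ Cornerless w ∧ hgt w = (h : ℤ) ∧
      w.count Step.H = d 0 ∧ w.count Step.U = d 1} : ℚ)

/-- Decomposition `G = U^a G₁ H G₂ D^a` of a strictly alternating bargraph. -/
def SADecomp (t : ℕ × List Step × List Step) (G : List Step) : Prop :=
  1 ≤ t.1 ∧ IsStrictAlt t.2.1 ∧ IsStrictAlt (Step.U :: (t.2.2 ++ [Step.D])) ∧
    G = List.replicate t.1 Step.U ++ t.2.1 ++ [Step.H] ++ t.2.2 ++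
      List.replicate t.1 Step.D


def fu (w : List Step) : ℕ := if w.head? = some Step.U then 1 else 0
def lu (w : List Step) : ℕ := if w.getLast? = some Step.U then 1 else 0
def fd (w : List Step) : ℕ := if w.head? = some Step.D then 1 else 0
def ld (w : List Step) : ℕ := if w.getLast? = some Step.D then 1 else 0

lemma cornerless_tail {x : Step} {t : List Step} (h : Cornerless (x :: t)) :
    Cornerless t := by
  constructor
  · intro h'; exact h.1 (h'.trans (List.suffix_cons x t).isInfix)
  · intro h'; exact h.2 (h'.trans (List.suffix_cons x t).isInfix)

lemma key1 : ∀ w : List Step, Cornerless w →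
    cnt2 Step.U Step.H w + lu w = cnt2 Step.H Step.U w + fu w
  | [], _ => by simp [cnt2, fu, lu]
  | [x], _ => by cases x <;> simp [cnt2, fu, lu]
  | x :: y :: r, h => by
    have ih := key1 (y :: r) (cornerless_tail h)
    have hlu : lu (x :: y :: r) = lu (y :: r) := by
      simp [lu, List.getLast?_cons_cons]
    cases x <;> cases y
    case U.D => exact absurd ⟨[], r, rfl⟩ h.1
    case D.U => exact absurd ⟨[], r, rfl⟩ h.2
    all_goals (simp [cnt2, hlu, fu, lu] at ih ⊢; try omega)

lemma key2 : ∀ w : List Step, Cornerless w →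
    cnt2 Step.H Step.D w + fd w = cnt2 Step.D Step.H w + ld w
  | [], _ => by simp [cnt2, fd, ld]
  | [x], _ => by cases x <;> simp [cnt2, fd, ld]
  | x :: y :: r, h => by
    have ih := key2 (y :: r) (cornerless_tail h)
    have hld : ld (x :: y :: r) = ld (y :: r) := by
      simp [ld, List.getLast?_cons_cons]
    cases x <;> cases y
    case U.D => exact absurd ⟨[], r, rfl⟩ h.1
    case D.U => exact absurd ⟨[], r, rfl⟩ h.2
    all_goals (simp [cnt2, hld, fd, ld] at ih ⊢; try omega)

lemma hgt_append (u v : List Step) : hgt (u ++ v) = hgt u + hgt v := by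
  simp [hgt]

lemma bargraph_head {x : Step} {t : List Step} (hw : IsBargraph (x :: t)) :
    x = Step.U := by
  have hne : [x] ≠ x :: t := by
    intro h
    have h2 := hw.1
    rw [← h] at h2
    simp at h2
  have hpos := hw.2.2.1 [x] ⟨t, rfl⟩ (by simp) hne
  cases x
  · rfl
  all_goals simp [hgt, Step.val] at hpos

lemma bargraph_last {w : List Step} (hw : IsBargraph w) :
    w.getLast? = some Step.D := by
  rcases List.eq_nil_or_concat w with rfl | ⟨w', l, rfl⟩
  · exact absurd hw.1 (by simp)
  · rw [List.concat_eq_append] at hw ⊢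
    have hne1 : w' ≠ [] := by
      intro h; subst h; have := hw.1; simp at this
    have hne2 : w' ≠ w' ++ [l] := by simp
    have hpos := hw.2.2.1 w' ⟨[l], rfl⟩ hne1 hne2
    have h0 := hw.2.1
    rw [hgt_append] at h0
    have hneg : hgt [l] < 0 := by omega
    cases l
    · simp [hgt, Step.val] at hneg
    · simp [hgt, Step.val] at hneg
    · simp

/-- in every bargraph, `#UH = #HU + 1` and `#HD = #DH + 1`. -/
theorem corner_relations (w : List Step) (hw : IsBargraph w) :
    cnt2 Step.U Step.H w = 1 + cnt2 Step.H Step.U w ∧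
    cnt2 Step.H Step.D w = 1 + cnt2 Step.D Step.H w := by
  obtain ⟨x, t, rfl⟩ : ∃ x t, w = x :: t := by
    cases w with
    | nil => simp [IsBargraph] at hw
    | cons a b => exact ⟨a, b, rfl⟩
  have hx := bargraph_head hw
  subst hx
  have hlast := bargraph_last hw
  have hc := hw.2.2.2
  have h1 := key1 _ hc
  have h2 := key2 _ hc
  have hfu : fu (Step.U :: t) = 1 := by simp [fu]
  have hfd : fd (Step.U :: t) = 0 := by simp [fd]
  have hlu : lu (Step.U :: t) = 0 := by simp [lu, hlast]
  have hld : ld (Step.U :: t) = 1 := by simp [ld, hlast]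
  omega
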